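/- Let Y be a discrete random variable, S a finite set of discrete random variables with Y ∉ S, and assume Y has multiple Markov boundaries within S. Fix M₀ to be one of them. For 0 < ε < 1, let S^ε be obtained from S by replacing each variable Z ∈ S \ M₀ by its ε-noise perturbation Z^ε (with mutually independent noise variables and switching indicators, jointly independent of all original variables and of Y). Then in the resulting joint distribution of (S^ε, Y), the set M₀ is the unique Markov boundary of Y within S^ε. -/

import Mathlib

open scoped BigOperators

noncomputable section

/-- `p` is a probability mass function on the finite type `Ω`. -/
def IsDist {Ω : Type*} [Fintype Ω] (p : Ω → ℝ) : Prop :=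
  (∀ w, 0 ≤ p w) ∧ ∑ w, p w = 1

/-- Total variation distance between two distributions on the same finite type. -/
def tvDist {Ω : Type*} [Fintype Ω] (p q : Ω → ℝ) : ℝ :=
  (∑ w, |p w - q w|) / 2

variable {ι : Type*} [Fintype ι] [DecidableEq ι]
variable {α : ι → Type*} [∀ i, Fintype (α i)] [∀ i, DecidableEq (α i)]

/-- Marginal probability, under joint pmf `p`, of the event that the variables in the
collection `A` take the values prescribed by the configuration `x`. -/
def margProb (p : (∀ i, α i) → ℝ) (A : Finset ι) (x : ∀ i, α i) : ℝ :=
  ∑ w : ∀ i, α i, if ∀ i ∈ A, w i = x i then p w else 0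

/-- Conditional independence of the collections `A` and `B` given the collection `C`:
`f(a, b | c) = f(a | c) f(b | c)` whenever `f(c) > 0` (stated in multiplied-out form). -/
def CondIndep (p : (∀ i, α i) → ℝ) (A B C : Finset ι) : Prop :=
  ∀ x : ∀ i, α i, 0 < margProb p C x →
    margProb p (A ∪ B ∪ C) x * margProb p C x =
      margProb p (A ∪ C) x * margProb p (B ∪ C) x

/-- `M` is a Markov blanket of the variable `y` within the collection `T`. -/
def MarkovBlanket (p : (∀ i, α i) → ℝ) (y : ι) (T M : Finset ι) : Prop :=
  M ⊆ T ∧ CondIndep p {y} (T \ M) M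

/-- `M` is a Markov boundary of `y` within `T`: a Markov blanket no proper subset of
which is a Markov blanket. -/
def MarkovBoundary (p : (∀ i, α i) → ℝ) (y : ι) (T M : Finset ι) : Prop :=
  MarkovBlanket p y T M ∧ ∀ M' ⊂ M, ¬ MarkovBlanket p y T M'

/-- Mutual information between the collections `A` and `B`
(with the convention `0 · log(junk) = 0` on zero-probability terms). -/
def MI (p : (∀ i, α i) → ℝ) (A B : Finset ι) : ℝ :=
  ∑ w : ∀ i, α i, p w *
    Real.log (margProb p (A ∪ B) w / (margProb p A w * margProb p B w))

/-- Conditional mutual information between collections `A` and `B` given `C`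
(with the convention `0 · log(junk) = 0` on zero-probability terms). -/
def CMI (p : (∀ i, α i) → ℝ) (A B C : Finset ι) : ℝ :=
  ∑ w : (∀ i, α i), p w *
    Real.log ((margProb p (A ∪ B ∪ C) w * margProb p C w) /
      (margProb p (A ∪ C) w * margProb p (B ∪ C) w))


/-- Joint pmf of the collection obtained by replacing, for each `i ∈ N`, the variable
`Z_i` by its ε-noise perturbation `Z_i^ε`: with probability `1 - ε` the perturbed
variable equals `Z_i` and otherwise it equals an independent noise variable with pmf
`q i`; the noise variables and Bernoulli(ε) switching indicators are mutually
independent and jointly independent of all the original variables. -/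
def perturb (p : (∀ i, α i) → ℝ) (N : Finset ι) (ε : ℝ) (q : ∀ i, α i → ℝ) :
    (∀ i, α i) → ℝ :=
  fun w => ∑ w₀ : ∀ i, α i, p w₀ *
    ∏ i : ι,
      if i ∈ N then (1 - ε) * (if w i = w₀ i then 1 else 0) + ε * q i (w i)
      else (if w i = w₀ i then 1 else 0)


lemma margProb_nonneg {p : (∀ i, α i) → ℝ} (hp : ∀ w, 0 ≤ p w) (A : Finset ι)
    (x : ∀ i, α i) : 0 ≤ margProb p A x := by
  refine Finset.sum_nonneg fun w _ => ?_
  split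
  · exact hp w
  · exact le_refl 0

lemma margProb_mono {p : (∀ i, α i) → ℝ} (hp : ∀ w, 0 ≤ p w) {A B : Finset ι}
    (hAB : A ⊆ B) (x : ∀ i, α i) : margProb p B x ≤ margProb p A x := by
  refine Finset.sum_le_sum fun w _ => ?_
  by_cases h : ∀ i ∈ B, w i = x i
  · rw [if_pos h, if_pos fun i hi => h i (hAB hi)]
  · rw [if_neg h]
    split
    · exact hp w
    · exact le_refl 0

lemma margProb_congr {p : (∀ i, α i) → ℝ} {A : Finset ι} {x x' : ∀ i, α i}
    (h : ∀ i ∈ A, x i = x' i) : margProb p A x = margProb p A x' := by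
  refine Finset.sum_congr rfl fun w _ => ?_
  have h2 : (∀ i ∈ A, w i = x i) ↔ (∀ i ∈ A, w i = x' i) :=
    ⟨fun hw i hi => (hw i hi).trans (h i hi), fun hw i hi => (hw i hi).trans (h i hi).symm⟩
  simp only [h2]

lemma margProb_sum_update {p : (∀ i, α i) → ℝ} {A : Finset ι} {j : ι} (hj : j ∈ A)
    (g : α j → ℝ) (x : ∀ i, α i) :
    ∑ v : α j, g v * margProb p A (Function.update x j v)
      = margProb (fun w => g (w j) * p w) (A.erase j) x := by
  unfold margProb
  simp only [Finset.mul_sum]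
  rw [Finset.sum_comm]
  refine Finset.sum_congr rfl fun w _ => ?_
  have key : ∀ v : α j, (∀ i ∈ A, w i = Function.update x j v i) ↔
      (w j = v ∧ ∀ i ∈ A.erase j, w i = x i) := by
    intro v
    constructor
    · intro h
      refine ⟨by simpa using h j hj, fun i hi => ?_⟩
      have := h i (Finset.mem_of_mem_erase hi)
      rwa [Function.update_of_ne (Finset.ne_of_mem_erase hi)] at this
    · rintro ⟨h1, h2⟩ i hi
      by_cases hij : i = j
      · subst hij; simpa using h1
      · rw [Function.update_of_ne hij]
        exact h2 i (Finset.mem_erase.2 ⟨hij, hi⟩)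
  have step : ∀ v : α j,
      g v * (if ∀ i ∈ A, w i = Function.update x j v i then p w else 0)
      = if v = w j then (if ∀ i ∈ A.erase j, w i = x i then g v * p w else 0) else 0 := by
    intro v
    by_cases h1 : v = w j
    · subst h1
      by_cases h2 : ∀ i ∈ A.erase j, w i = x i
      · rw [if_pos rfl, if_pos h2, if_pos ((key _).2 ⟨rfl, h2⟩)]
      · rw [if_pos rfl, if_neg h2, if_neg, mul_zero]
        intro hc; exact h2 ((key _).1 hc).2
    · rw [if_neg h1, if_neg, mul_zero]
      intro hc; exact h1 (((key v).1 hc).1).symm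
  rw [Finset.sum_congr rfl fun v _ => step v, Finset.sum_ite_eq' Finset.univ (w j)]
  simp

lemma margProb_sum_update' {p : (∀ i, α i) → ℝ} {A : Finset ι} {j : ι} (hj : j ∈ A)
    (x : ∀ i, α i) :
    ∑ v : α j, margProb p A (Function.update x j v) = margProb p (A.erase j) x := by
  have := margProb_sum_update (p := p) hj (fun _ : α j => (1 : ℝ)) x
  simpa using this

lemma margProb_sum_out {p : (∀ i, α i) → ℝ} (D : Finset ι) :
    ∀ (g : ∀ i, α i → ℝ) (A₁ A₂ : Finset ι) (c : ℝ) (x : ∀ i, α i),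
    D ⊆ A₁ → D ⊆ A₂ →
    (∀ x' : ∀ i, α i, (∀ i, i ∉ D → x' i = x i) →
      margProb p A₁ x' = c * margProb p A₂ x') →
    margProb (fun w => (∏ i ∈ D, g i (w i)) * p w) (A₁ \ D) x
      = c * margProb (fun w => (∏ i ∈ D, g i (w i)) * p w) (A₂ \ D) x := by
  induction D using Finset.induction_on with
  | empty =>
    intro g A₁ A₂ c x _ _ h
    simp only [Finset.prod_empty, one_mul, Finset.sdiff_empty]
    exact h x (fun i _ => rfl)
  | @insert j D₀ hj ih =>
    intro g A₁ A₂ c x h1 h2 h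
    have hjA₁ : j ∈ A₁ \ D₀ :=
      Finset.mem_sdiff.2 ⟨h1 (Finset.mem_insert_self j D₀), hj⟩
    have hjA₂ : j ∈ A₂ \ D₀ :=
      Finset.mem_sdiff.2 ⟨h2 (Finset.mem_insert_self j D₀), hj⟩
    have hD₀₁ : D₀ ⊆ A₁ := fun i hi => h1 (Finset.mem_insert_of_mem hi)
    have hD₀₂ : D₀ ⊆ A₂ := fun i hi => h2 (Finset.mem_insert_of_mem hi)
    have ihv : ∀ v : α j,
        margProb (fun w => (∏ i ∈ D₀, g i (w i)) * p w) (A₁ \ D₀) (Function.update x j v)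
        = c * margProb (fun w => (∏ i ∈ D₀, g i (w i)) * p w) (A₂ \ D₀)
            (Function.update x j v) := by
      intro v
      refine ih g A₁ A₂ c (Function.update x j v) hD₀₁ hD₀₂ fun x' hx' => ?_
      refine h x' fun i hi => ?_
      have hij : i ≠ j := fun e => hi (e ▸ Finset.mem_insert_self j D₀)
      have hiD₀ : i ∉ D₀ := fun e => hi (Finset.mem_insert_of_mem e)
      rw [hx' i hiD₀, Function.update_of_ne hij]
    have key : ∑ v : α j, g j v *
          margProb (fun w => (∏ i ∈ D₀, g i (w i)) * p w) (A₁ \ D₀) (Function.update x j v)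
        = c * ∑ v : α j, g j v *
          margProb (fun w => (∏ i ∈ D₀, g i (w i)) * p w) (A₂ \ D₀)
            (Function.update x j v) := by
      rw [Finset.mul_sum]
      refine Finset.sum_congr rfl fun v _ => ?_
      rw [ihv v]; ring
    rw [margProb_sum_update hjA₁ (g j) x, margProb_sum_update hjA₂ (g j) x] at key
    have hfun : (fun w => g j (w j) * ((∏ i ∈ D₀, g i (w i)) * p w))
        = (fun w => (∏ i ∈ insert j D₀, g i (w i)) * p w) := by
      funext w
      rw [Finset.prod_insert hj, mul_assoc]
    have hset1 : (A₁ \ D₀).erase j = A₁ \ insert j D₀ := by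
      ext a
      simp only [Finset.mem_erase, Finset.mem_sdiff, Finset.mem_insert]
      tauto
    have hset2 : (A₂ \ D₀).erase j = A₂ \ insert j D₀ := by
      ext a
      simp only [Finset.mem_erase, Finset.mem_sdiff, Finset.mem_insert]
      tauto
    rw [hfun, hset1, hset2] at key
    exact key

lemma margProb_perturb {p : (∀ i, α i) → ℝ} {N : Finset ι} {ε : ℝ} {q : ∀ i, α i → ℝ}
    (hq : ∀ i ∈ N, ∑ v, q i v = 1) (A : Finset ι) (x : ∀ i, α i) :
    margProb (perturb p N ε q) A x
      = ∑ w₀ : ∀ i, α i, p w₀ * ∏ i ∈ A,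
          (if i ∈ N then (1 - ε) * (if x i = w₀ i then 1 else 0) + ε * q i (x i)
           else (if x i = w₀ i then 1 else 0)) := by
  unfold margProb perturb
  have push : ∀ w : ∀ i, α i,
      (if ∀ i ∈ A, w i = x i then
        (∑ w₀ : ∀ i, α i, p w₀ * ∏ i : ι,
          if i ∈ N then (1 - ε) * (if w i = w₀ i then 1 else 0) + ε * q i (w i)
          else (if w i = w₀ i then 1 else 0)) else 0)
      = ∑ w₀ : ∀ i, α i, (if ∀ i ∈ A, w i = x i then p w₀ * ∏ i : ι,
          (if i ∈ N then (1 - ε) * (if w i = w₀ i then 1 else 0) + ε * q i (w i)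
           else (if w i = w₀ i then 1 else 0)) else 0) := by
    intro w
    split
    · rfl
    · simp
  rw [Finset.sum_congr rfl fun w _ => push w, Finset.sum_comm]
  refine Finset.sum_congr rfl fun w₀ _ => ?_
  set F : ∀ i, α i → ℝ := fun i a =>
    if i ∈ N then (1 - ε) * (if a = w₀ i then 1 else 0) + ε * q i a
    else (if a = w₀ i then 1 else 0) with hF
  set G : ∀ i, α i → ℝ := fun i a =>
    if i ∈ A then (if a = x i then F i a else 0) else F i a with hG
  have hsummand : ∀ w : ∀ i, α i,
      (if ∀ i ∈ A, w i = x i then p w₀ * ∏ i : ι, F i (w i) else 0)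
      = p w₀ * ∏ i : ι, G i (w i) := by
    intro w
    by_cases hc : ∀ i ∈ A, w i = x i
    · rw [if_pos hc]
      congr 1
      refine Finset.prod_congr rfl fun i _ => ?_
      by_cases hiA : i ∈ A
      · simp only [hG, if_pos hiA, if_pos (hc i hiA)]
      · simp only [hG, if_neg hiA]
    · rw [if_neg hc]
      push_neg at hc
      obtain ⟨i₀, hi₀A, hi₀⟩ := hc
      have : G i₀ (w i₀) = 0 := by
        simp only [hG, if_pos hi₀A, if_neg hi₀]
      rw [Finset.prod_eq_zero (Finset.mem_univ i₀) this, mul_zero]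
  rw [Finset.sum_congr rfl fun w _ => hsummand w, ← Finset.mul_sum, ← Fintype.prod_sum]
  congr 1
  rw [← Finset.prod_sdiff (Finset.subset_univ A)]
  have h1 : ∏ i ∈ Finset.univ \ A, (∑ a : α i, G i a) = 1 := by
    refine Finset.prod_eq_one fun i hi => ?_
    have hiA : i ∉ A := (Finset.mem_sdiff.1 hi).2
    simp only [hG, if_neg hiA]
    by_cases hiN : i ∈ N
    · simp only [hF, if_pos hiN]
      rw [Finset.sum_add_distrib, ← Finset.mul_sum, ← Finset.mul_sum]
      rw [Finset.sum_ite_eq' Finset.univ (w₀ i) (fun _ => (1:ℝ)), if_pos (Finset.mem_univ _),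
        hq i hiN]
      ring
    · simp only [hF, if_neg hiN]
      rw [Finset.sum_ite_eq' Finset.univ (w₀ i) (fun _ => (1:ℝ)), if_pos (Finset.mem_univ _)]
  have h2 : ∀ i ∈ A, (∑ a : α i, G i a) = F i (x i) := by
    intro i hiA
    simp only [hG, if_pos hiA]
    rw [Finset.sum_ite_eq' Finset.univ (x i) (F i), if_pos (Finset.mem_univ _)]
  rw [h1, one_mul]
  exact Finset.prod_congr rfl h2

lemma prod_ind01 {B : Finset ι} (x w : ∀ i, α i) :
    (∏ i ∈ B, if x i = w i then (1:ℝ) else 0)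
      = if ∀ i ∈ B, w i = x i then 1 else 0 := by
  by_cases hc : ∀ i ∈ B, w i = x i
  · rw [if_pos hc]
    exact Finset.prod_eq_one fun i hi => by rw [if_pos (hc i hi).symm]
  · rw [if_neg hc]
    push_neg at hc
    obtain ⟨i₀, hi₀, hne⟩ := hc
    exact Finset.prod_eq_zero hi₀ (by rw [if_neg (fun h => hne h.symm)])

lemma margProb_perturb_split {p : (∀ i, α i) → ℝ} {N : Finset ι} {ε : ℝ}
    {q : ∀ i, α i → ℝ} (hq : ∀ i ∈ N, ∑ v, q i v = 1) (A : Finset ι) (x : ∀ i, α i) :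
    margProb (perturb p N ε q) A x
      = margProb (fun w => (∏ i ∈ A ∩ N,
          ((1 - ε) * (if x i = w i then 1 else 0) + ε * q i (x i))) * p w) (A \ N) x := by
  rw [margProb_perturb hq]
  unfold margProb
  refine Finset.sum_congr rfl fun w₀ _ => ?_
  rw [← Finset.prod_inter_mul_prod_diff A N]
  have h1 : ∏ i ∈ A ∩ N,
      (if i ∈ N then (1 - ε) * (if x i = w₀ i then 1 else 0) + ε * q i (x i)
       else (if x i = w₀ i then 1 else 0))
      = ∏ i ∈ A ∩ N, ((1 - ε) * (if x i = w₀ i then 1 else 0) + ε * q i (x i)) :=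
    Finset.prod_congr rfl fun i hi => if_pos (Finset.mem_inter.1 hi).2
  have h2 : ∏ i ∈ A \ N,
      (if i ∈ N then (1 - ε) * (if x i = w₀ i then 1 else 0) + ε * q i (x i)
       else (if x i = w₀ i then 1 else 0))
      = if ∀ i ∈ A \ N, w₀ i = x i then 1 else 0 := by
    rw [Finset.prod_congr rfl fun i hi =>
      if_neg (Finset.mem_sdiff.1 hi).2, prod_ind01]
  rw [h1, h2]
  split
  · ring
  · ring

lemma margProb_perturb_disjoint {p : (∀ i, α i) → ℝ} {N : Finset ι} {ε : ℝ}
    {q : ∀ i, α i → ℝ} (hq : ∀ i ∈ N, ∑ v, q i v = 1) {A : Finset ι}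
    (hAN : Disjoint A N) (x : ∀ i, α i) :
    margProb (perturb p N ε q) A x = margProb p A x := by
  rw [margProb_perturb_split hq]
  rw [Finset.disjoint_iff_inter_eq_empty.1 hAN, Finset.sdiff_eq_self_of_disjoint hAN]
  simp only [Finset.prod_empty, one_mul]

lemma margProb_perturb_ge {p : (∀ i, α i) → ℝ} {N : Finset ι} {ε : ℝ}
    {q : ∀ i, α i → ℝ} (hp : ∀ w, 0 ≤ p w)
    (hq : ∀ i ∈ N, (∀ v, 0 < q i v) ∧ ∑ v, q i v = 1)
    (hε0 : 0 < ε) (hε1 : ε < 1) {A B : Finset ι}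
    (hAN : Disjoint A N) (hB : B ⊆ N) (x : ∀ i, α i) :
    (∏ i ∈ B, ε * q i (x i)) * margProb p A x
      ≤ margProb (perturb p N ε q) (A ∪ B) x := by
  have hq1 : ∀ i ∈ N, ∑ v, q i v = 1 := fun i hi => (hq i hi).2
  rw [margProb_perturb hq1]
  unfold margProb
  rw [Finset.mul_sum]
  refine Finset.sum_le_sum fun w₀ _ => ?_
  have hAB : Disjoint A B := hAN.mono_right hB
  rw [Finset.prod_union hAB]
  have hA : ∏ i ∈ A,
      (if i ∈ N then (1 - ε) * (if x i = w₀ i then 1 else 0) + ε * q i (x i)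
       else (if x i = w₀ i then 1 else 0))
      = if ∀ i ∈ A, w₀ i = x i then 1 else 0 := by
    rw [Finset.prod_congr rfl fun i hi =>
      if_neg (Finset.disjoint_left.1 hAN hi), prod_ind01]
  rw [hA]
  have hBineq : (∏ i ∈ B, ε * q i (x i)) ≤ ∏ i ∈ B,
      (if i ∈ N then (1 - ε) * (if x i = w₀ i then 1 else 0) + ε * q i (x i)
       else (if x i = w₀ i then 1 else 0)) := by
    refine Finset.prod_le_prod (fun i hi => ?_) (fun i hi => ?_)
    · exact le_of_lt (mul_pos hε0 ((hq i (hB hi)).1 (x i)))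
    · rw [if_pos (hB hi)]
      have : (0:ℝ) ≤ (1 - ε) * (if x i = w₀ i then 1 else 0) := by
        apply mul_nonneg (by linarith)
        split
        · exact zero_le_one
        · exact le_refl 0
      linarith
  by_cases hc : ∀ i ∈ A, w₀ i = x i
  · rw [if_pos hc, if_pos hc, one_mul, mul_comm (p w₀)]
    exact mul_le_mul_of_nonneg_right hBineq (hp w₀)
  · rw [if_neg hc, if_neg hc, mul_zero, zero_mul, mul_zero]

lemma perturb_nonneg {p : (∀ i, α i) → ℝ} {N : Finset ι} {ε : ℝ}
    {q : ∀ i, α i → ℝ} (hp : ∀ w, 0 ≤ p w)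
    (hq : ∀ i ∈ N, ∀ v, 0 ≤ q i v) (hε0 : 0 ≤ ε) (hε1 : ε ≤ 1) :
    ∀ w, 0 ≤ perturb p N ε q w := by
  intro w
  refine Finset.sum_nonneg fun w₀ _ => ?_
  refine mul_nonneg (hp w₀) (Finset.prod_nonneg fun i _ => ?_)
  split
  · rename_i hiN
    have h1 : (0:ℝ) ≤ (1 - ε) * (if w i = w₀ i then 1 else 0) := by
      apply mul_nonneg (by linarith)
      split
      · exact zero_le_one
      · exact le_refl 0
    have h2 : (0:ℝ) ≤ ε * q i (w i) := mul_nonneg hε0 (hq i hiN (w i))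
    linarith
  · split
    · exact zero_le_one
    · exact le_refl 0

lemma condIndep_erase {p : (∀ i, α i) → ℝ} {y j : ι} {B C : Finset ι}
    (hj : j ∈ B) (hjy : j ≠ y) (hjC : j ∉ C)
    (h : CondIndep p {y} B C) : CondIndep p {y} (B.erase j) C := by
  intro x hx
  have hCc : ∀ v : α j, margProb p C (Function.update x j v) = margProb p C x := by
    intro v
    exact (margProb_congr (fun i hi =>
      (Function.update_of_ne (fun e => hjC (by rw [← e]; exact hi)) v x).symm)).symm
  have hyCc : ∀ v : α j,
      margProb p ({y} ∪ C) (Function.update x j v) = margProb p ({y} ∪ C) x := by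
    intro v
    refine (margProb_congr (fun i hi => (Function.update_of_ne ?_ v x).symm)).symm
    intro e
    rcases Finset.mem_union.1 hi with hy | hC
    · exact hjy (e ▸ (Finset.mem_singleton.1 hy))
    · exact hjC (e ▸ hC)
  have e1 : ({y} ∪ B ∪ C).erase j = {y} ∪ B.erase j ∪ C := by
    ext a
    simp only [Finset.mem_erase, Finset.mem_union, Finset.mem_singleton]
    constructor
    · rintro ⟨haj, (hy | hB) | hC⟩
      · exact Or.inl (Or.inl hy)
      · exact Or.inl (Or.inr ⟨haj, hB⟩)
      · exact Or.inr hC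
    · rintro ((hy | ⟨haj, hB⟩) | hC)
      · exact ⟨fun e => hjy (e ▸ hy), Or.inl (Or.inl hy)⟩
      · exact ⟨haj, Or.inl (Or.inr hB)⟩
      · exact ⟨fun e => hjC (e ▸ hC), Or.inr hC⟩
  have e2 : (B ∪ C).erase j = B.erase j ∪ C := by
    ext a
    simp only [Finset.mem_erase, Finset.mem_union]
    constructor
    · rintro ⟨haj, hB | hC⟩
      · exact Or.inl ⟨haj, hB⟩
      · exact Or.inr hC
    · rintro (hB | hC)
      · exact ⟨hB.1, Or.inl hB.2⟩
      · exact ⟨fun e => hjC (e ▸ hC), Or.inr hC⟩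
  have s1 := margProb_sum_update' (p := p)
    (show j ∈ {y} ∪ B ∪ C from Finset.mem_union.2 (Or.inl (Finset.mem_union.2 (Or.inr hj)))) x
  have s2 := margProb_sum_update' (p := p)
    (show j ∈ B ∪ C from Finset.mem_union.2 (Or.inl hj)) x
  rw [e1] at s1
  rw [e2] at s2
  calc margProb p ({y} ∪ B.erase j ∪ C) x * margProb p C x
      = (∑ v : α j, margProb p ({y} ∪ B ∪ C) (Function.update x j v)) * margProb p C x := by
        rw [s1]
    _ = ∑ v : α j, margProb p ({y} ∪ B ∪ C) (Function.update x j v) * margProb p C x := by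
        rw [Finset.sum_mul]
    _ = ∑ v : α j, margProb p ({y} ∪ C) x * margProb p (B ∪ C) (Function.update x j v) := by
        refine Finset.sum_congr rfl fun v _ => ?_
        have hv := h (Function.update x j v) (by rw [hCc v]; exact hx)
        rw [hCc v, hyCc v] at hv
        exact hv
    _ = margProb p ({y} ∪ C) x * ∑ v : α j, margProb p (B ∪ C) (Function.update x j v) := by
        rw [Finset.mul_sum]
    _ = margProb p ({y} ∪ C) x * margProb p (B.erase j ∪ C) x := by rw [s2]

lemma condIndep_subset {p : (∀ i, α i) → ℝ} {y : ι} :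
    ∀ (n : ℕ) (B T C : Finset ι), B.card ≤ n → y ∉ B → Disjoint B C → T ⊆ B →
    CondIndep p {y} B C → CondIndep p {y} T C := by
  intro n
  induction n with
  | zero =>
    intro B T C hcard hy hBC hTB h
    have hB : B = ∅ := Finset.card_eq_zero.1 (Nat.le_zero.1 hcard)
    have hT : T = ∅ := Finset.subset_empty.1 (hB ▸ hTB)
    rwa [hT, ← hB]
  | succ n ih =>
    intro B T C hcard hy hBC hTB h
    by_cases hTB' : B ⊆ T
    · rwa [Finset.Subset.antisymm hTB hTB']
    · obtain ⟨j, hjB, hjT⟩ := Finset.not_subset.1 hTB'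
      have hj' : CondIndep p {y} (B.erase j) C :=
        condIndep_erase hjB (fun e => hy (e ▸ hjB)) (Finset.disjoint_left.1 hBC hjB) h
      refine ih (B.erase j) T C ?_ (fun e => hy (Finset.mem_of_mem_erase e)) ?_ ?_ hj'
      · have := Finset.card_erase_of_mem hjB
        omega
      · exact hBC.mono_left (Finset.erase_subset j B)
      · intro a ha
        exact Finset.mem_erase.2 ⟨fun e => hjT (e ▸ ha), hTB ha⟩

lemma condIndep_contraction {p : (∀ i, α i) → ℝ} (hp : ∀ w, 0 ≤ p w) {y : ι}
    {A B C : Finset ι}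
    (h1 : CondIndep p {y} A (B ∪ C)) (h2 : CondIndep p {y} B C) :
    CondIndep p {y} (A ∪ B) C := by
  intro x hx
  have e1 : {y} ∪ (A ∪ B) ∪ C = {y} ∪ A ∪ (B ∪ C) := by
    ext a
    simp only [Finset.mem_union]
    tauto
  have e2 : (A ∪ B) ∪ C = A ∪ (B ∪ C) := Finset.union_assoc A B C
  rw [e1, e2]
  by_cases hBC : 0 < margProb p (B ∪ C) x
  · have H1 := h1 x hBC
    have H2 := h2 x hx
    have hBCne : margProb p (B ∪ C) x ≠ 0 := ne_of_gt hBC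
    have key : margProb p ({y} ∪ A ∪ (B ∪ C)) x * margProb p C x * margProb p (B ∪ C) x
        = margProb p ({y} ∪ C) x * margProb p (A ∪ (B ∪ C)) x * margProb p (B ∪ C) x := by
      calc margProb p ({y} ∪ A ∪ (B ∪ C)) x * margProb p C x * margProb p (B ∪ C) x
          = (margProb p ({y} ∪ A ∪ (B ∪ C)) x * margProb p (B ∪ C) x) * margProb p C x := by
            ring
        _ = (margProb p ({y} ∪ (B ∪ C)) x * margProb p (A ∪ (B ∪ C)) x) * margProb p C x := by
            rw [H1]
        _ = (margProb p ({y} ∪ (B ∪ C)) x * margProb p C x) * margProb p (A ∪ (B ∪ C)) x := by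
            ring
        _ = (margProb p ({y} ∪ C) x * margProb p (B ∪ C) x) * margProb p (A ∪ (B ∪ C)) x := by
            have e3 : {y} ∪ (B ∪ C) = {y} ∪ B ∪ C := (Finset.union_assoc _ B C).symm
            rw [e3, H2]
        _ = margProb p ({y} ∪ C) x * margProb p (A ∪ (B ∪ C)) x * margProb p (B ∪ C) x := by
            ring
    exact mul_right_cancel₀ hBCne key
  · have hBC0 : margProb p (B ∪ C) x = 0 :=
      le_antisymm (not_lt.1 hBC) (margProb_nonneg hp _ x)
    have hL : margProb p ({y} ∪ A ∪ (B ∪ C)) x = 0 := by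
      refine le_antisymm ?_ (margProb_nonneg hp _ x)
      rw [← hBC0]
      exact margProb_mono hp (fun a ha => by simp [Finset.mem_union] at ha ⊢; tauto) x
    have hR : margProb p (A ∪ (B ∪ C)) x = 0 := by
      refine le_antisymm ?_ (margProb_nonneg hp _ x)
      rw [← hBC0]
      exact margProb_mono hp (fun a ha => by simp [Finset.mem_union] at ha ⊢; tauto) x
    rw [hL, hR, zero_mul, mul_zero]

lemma condIndep_perturb {p : (∀ i, α i) → ℝ} {N : Finset ι} {ε : ℝ} {q : ∀ i, α i → ℝ}
    (hq : ∀ i ∈ N, ∑ v, q i v = 1) {y : ι} {A C : Finset ι}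
    (hA : A ⊆ N) (hC : Disjoint C N) (hy : y ∉ N)
    (h : CondIndep p {y} A C) : CondIndep (perturb p N ε q) {y} A C := by
  have hyC : Disjoint ({y} ∪ C) N := by
    rw [Finset.disjoint_union_left]
    exact ⟨Finset.disjoint_singleton_left.2 hy, hC⟩
  have hyA : y ∉ A := fun e => hy (hA e)
  have hCA : Disjoint C A := hC.mono_right hA
  intro x hx
  rw [margProb_perturb_disjoint hq hC] at hx ⊢
  rw [margProb_perturb_disjoint hq hyC]
  set m := margProb p C x with hm
  set my := margProb p ({y} ∪ C) x with hmy
  set c := my / m with hc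
  have hpt : ∀ x' : ∀ i, α i, (∀ i, i ∉ A → x' i = x i) →
      margProb p ({y} ∪ A ∪ C) x' = c * margProb p (A ∪ C) x' := by
    intro x' hx'
    have hCx' : margProb p C x' = m :=
      (margProb_congr fun i hi => (hx' i (Finset.disjoint_left.1 hCA hi)).symm).symm
    have hyCx' : margProb p ({y} ∪ C) x' = my := by
      refine (margProb_congr fun i hi => (hx' i ?_).symm).symm
      rcases Finset.mem_union.1 hi with h1 | h1
      · exact fun e => hyA ((Finset.mem_singleton.1 h1) ▸ e)
      · exact Finset.disjoint_left.1 hCA h1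
    have H := h x' (by rw [hCx']; exact hx)
    rw [hCx', hyCx'] at H
    rw [hc, div_mul_eq_mul_div, eq_div_iff (ne_of_gt hx)]
    linarith [H]
  have i1 : ({y} ∪ A ∪ C) ∩ N = A := by
    ext a
    simp only [Finset.mem_inter, Finset.mem_union, Finset.mem_singleton]
    constructor
    · rintro ⟨(hy1 | hA1) | hC1, hN1⟩
      · exact absurd (hy1 ▸ hN1) hy
      · exact hA1
      · exact absurd hN1 (Finset.disjoint_left.1 hC hC1)
    · intro hA1
      exact ⟨Or.inl (Or.inr hA1), hA hA1⟩
  have s1 : ({y} ∪ A ∪ C) \ N = {y} ∪ C := by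
    ext a
    simp only [Finset.mem_sdiff, Finset.mem_union, Finset.mem_singleton]
    constructor
    · rintro ⟨(hy1 | hA1) | hC1, hN1⟩
      · exact Or.inl hy1
      · exact absurd (hA hA1) hN1
      · exact Or.inr hC1
    · rintro (hy1 | hC1)
      · exact ⟨Or.inl (Or.inl hy1), fun e => hy (hy1 ▸ e)⟩
      · exact ⟨Or.inr hC1, Finset.disjoint_left.1 hC hC1⟩
  have i2 : (A ∪ C) ∩ N = A := by
    ext a
    simp only [Finset.mem_inter, Finset.mem_union]
    constructor
    · rintro ⟨hA1 | hC1, hN1⟩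
      · exact hA1
      · exact absurd hN1 (Finset.disjoint_left.1 hC hC1)
    · intro hA1
      exact ⟨Or.inl hA1, hA hA1⟩
  have s2 : (A ∪ C) \ N = C := by
    ext a
    simp only [Finset.mem_sdiff, Finset.mem_union]
    constructor
    · rintro ⟨hA1 | hC1, hN1⟩
      · exact absurd (hA hA1) hN1
      · exact hC1
    · intro hC1
      exact ⟨Or.inr hC1, Finset.disjoint_left.1 hC hC1⟩
  have d1 : ({y} ∪ A ∪ C) \ A = {y} ∪ C := by
    ext a
    simp only [Finset.mem_sdiff, Finset.mem_union, Finset.mem_singleton]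
    constructor
    · rintro ⟨(hy1 | hA1) | hC1, hN1⟩
      · exact Or.inl hy1
      · exact absurd hA1 hN1
      · exact Or.inr hC1
    · rintro (hy1 | hC1)
      · exact ⟨Or.inl (Or.inl hy1), fun e => hyA (hy1 ▸ e)⟩
      · exact ⟨Or.inr hC1, Finset.disjoint_left.1 hCA hC1⟩
  have d2 : (A ∪ C) \ A = C := by
    ext a
    simp only [Finset.mem_sdiff, Finset.mem_union]
    constructor
    · rintro ⟨hA1 | hC1, hN1⟩
      · exact absurd hA1 hN1
      · exact hC1
    · intro hC1
      exact ⟨Or.inr hC1, Finset.disjoint_left.1 hCA hC1⟩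
  have so := margProb_sum_out (p := p) A
    (fun i b => (1 - ε) * (if x i = b then 1 else 0) + ε * q i (x i))
    ({y} ∪ A ∪ C) (A ∪ C) c x
    (fun a ha => Finset.mem_union.2 (Or.inl (Finset.mem_union.2 (Or.inr ha))))
    (fun a ha => Finset.mem_union.2 (Or.inl ha)) hpt
  rw [d1, d2] at so
  have split1 : margProb (perturb p N ε q) ({y} ∪ A ∪ C) x
      = margProb (fun w => (∏ i ∈ A,
          ((1 - ε) * (if x i = w i then 1 else 0) + ε * q i (x i))) * p w) ({y} ∪ C) x := by
    rw [margProb_perturb_split hq, i1, s1]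
  have split2 : margProb (perturb p N ε q) (A ∪ C) x
      = margProb (fun w => (∏ i ∈ A,
          ((1 - ε) * (if x i = w i then 1 else 0) + ε * q i (x i))) * p w) C x := by
    rw [margProb_perturb_split hq, i2, s2]
  rw [split1, split2]
  have so' : margProb (fun w => (∏ i ∈ A,
          ((1 - ε) * (if x i = w i then 1 else 0) + ε * q i (x i))) * p w) ({y} ∪ C) x
      = c * margProb (fun w => (∏ i ∈ A,
          ((1 - ε) * (if x i = w i then 1 else 0) + ε * q i (x i))) * p w) C x := so
  rw [so']
  rw [hc]
  field_simp

lemma blanket_contains {p : (∀ i, α i) → ℝ} (hp0 : ∀ w, 0 ≤ p w)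
    {y : ι} {S : Finset ι} (hyS : y ∉ S) {M₀ : Finset ι}
    (hM₀ : MarkovBoundary p y S M₀)
    {ε : ℝ} (hε0 : 0 < ε) (hε1 : ε < 1)
    {q : ∀ i, α i → ℝ} (hq : ∀ i ∈ S \ M₀, (∀ v, 0 < q i v) ∧ ∑ v, q i v = 1)
    {M : Finset ι} (hM : MarkovBlanket (perturb p (S \ M₀) ε q) y S M) : M₀ ⊆ M := by
  by_contra hcon
  obtain ⟨j, hjM₀, hjM⟩ := Finset.not_subset.1 hcon
  have hq1 : ∀ i ∈ S \ M₀, ∑ v, q i v = 1 := fun i hi => (hq i hi).2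
  have hM₀S : M₀ ⊆ S := hM₀.1.1
  have hMS : M ⊆ S := hM.1
  have hyM : y ∉ M := fun e => hyS (hMS e)
  have hyM₀ : y ∉ M₀ := fun e => hyS (hM₀S e)
  have hyN : y ∉ S \ M₀ := fun e => hyS (Finset.mem_sdiff.1 e).1
  have hM₀N : Disjoint M₀ (S \ M₀) := Finset.disjoint_sdiff
  have hQN : M \ M₀ ⊆ S \ M₀ := fun a ha =>
    Finset.mem_sdiff.2 ⟨hMS (Finset.mem_sdiff.1 ha).1, (Finset.mem_sdiff.1 ha).2⟩
  have hPN : Disjoint (M ∩ M₀) (S \ M₀) := hM₀N.mono_left Finset.inter_subset_right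
  have hp'0 : ∀ w, 0 ≤ perturb p (S \ M₀) ε q w :=
    perturb_nonneg hp0 (fun i hi v => le_of_lt ((hq i hi).1 v)) (le_of_lt hε0) (le_of_lt hε1)
  -- set identities
  have eAP : (M₀ \ M) ∪ (M ∩ M₀) = M₀ := by
    ext a
    simp only [Finset.mem_union, Finset.mem_sdiff, Finset.mem_inter]
    tauto
  have eM : (M ∩ M₀) ∪ (M \ M₀) = M := by
    ext a
    simp only [Finset.mem_union, Finset.mem_sdiff, Finset.mem_inter]
    tauto
  have eK1 : (M₀ \ M) ∪ M = M₀ ∪ M := by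
    ext a
    simp only [Finset.mem_union, Finset.mem_sdiff]
    tauto
  have eK2 : (M \ M₀) ∪ M₀ = M₀ ∪ M := by
    ext a
    simp only [Finset.mem_union, Finset.mem_sdiff]
    tauto
  have e_M : M \ (M \ M₀) = M ∩ M₀ := by
    ext a
    simp only [Finset.mem_sdiff, Finset.mem_inter]
    tauto
  have e_yM : ({y} ∪ M) \ (M \ M₀) = {y} ∪ (M ∩ M₀) := by
    ext a
    simp only [Finset.mem_sdiff, Finset.mem_union, Finset.mem_singleton, Finset.mem_inter]
    constructor
    · rintro ⟨hy1 | hM1, h2⟩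
      · exact Or.inl hy1
      · by_cases hM₀1 : a ∈ M₀
        · exact Or.inr ⟨hM1, hM₀1⟩
        · exact absurd ⟨hM1, hM₀1⟩ h2
    · rintro (hy1 | ⟨h1, h2⟩)
      · exact ⟨Or.inl hy1, fun h => hyM (hy1 ▸ h.1)⟩
      · exact ⟨Or.inr h1, fun h => h.2 h2⟩
  -- CI1 : under p', y ⊥ (M₀ \ M) | M
  have CI1 : CondIndep (perturb p (S \ M₀) ε q) {y} (M₀ \ M) M := by
    refine condIndep_subset (S \ M).card (S \ M) (M₀ \ M) M le_rfl (fun e => hyS (Finset.mem_sdiff.1 e).1) ?_ ?_ hM.2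
    · exact Finset.sdiff_disjoint
    · exact fun a ha => Finset.mem_sdiff.2
        ⟨hM₀S (Finset.mem_sdiff.1 ha).1, (Finset.mem_sdiff.1 ha).2⟩
  -- CI2 : under p', y ⊥ (M\M₀)ᵉ | M₀
  have CI2 : CondIndep (perturb p (S \ M₀) ε q) {y} (M \ M₀) M₀ := by
    refine condIndep_perturb hq1 hQN hM₀N hyN ?_
    exact condIndep_subset (S \ M₀).card (S \ M₀) (M \ M₀) M₀ le_rfl hyN
      Finset.sdiff_disjoint hQN hM₀.1.2
  have eK2' : M₀ ∪ (M \ M₀) = M₀ ∪ M := by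
    ext a
    simp only [Finset.mem_union, Finset.mem_sdiff]
    tauto
  -- Main pointwise argument
  have CIp' : CondIndep (perturb p (S \ M₀) ε q) {y} (M₀ \ M) (M ∩ M₀) := by
    intro x hx
    have eyAP : {y} ∪ (M₀ \ M) ∪ (M ∩ M₀) = {y} ∪ M₀ := by
      rw [Finset.union_assoc, eAP]
    rw [eyAP, eAP]
    rcases (margProb_nonneg hp'0 M₀ x).lt_or_eq with hpos | hz
    swap
    · have h1 : margProb (perturb p (S \ M₀) ε q) ({y} ∪ M₀) x = 0 :=
        le_antisymm (le_trans (margProb_mono hp'0 Finset.subset_union_right x) hz.ge)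
          (margProb_nonneg hp'0 _ x)
      rw [h1, ← hz, zero_mul, mul_zero]
    · have hxP : 0 < margProb p (M ∩ M₀) x := by
        rwa [margProb_perturb_disjoint hq1 hPN] at hx
      have hpt : ∀ x' : ∀ i, α i, (∀ i, i ∉ M \ M₀ → x' i = x i) →
          margProb (perturb p (S \ M₀) ε q) ({y} ∪ M) x'
            = (margProb (perturb p (S \ M₀) ε q) ({y} ∪ M₀) x
                / margProb (perturb p (S \ M₀) ε q) M₀ x)
              * margProb (perturb p (S \ M₀) ε q) M x' := by
        intro x' hx'
        have agree : ∀ (X : Finset ι) (r : (∀ i, α i) → ℝ), Disjoint X (M \ M₀) →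
            margProb r X x' = margProb r X x := fun X r hX =>
          (margProb_congr fun i hi => (hx' i (Finset.disjoint_left.1 hX hi)).symm).symm
        have dM₀Q : Disjoint M₀ (M \ M₀) := hM₀N.mono_right hQN
        have dPQ : Disjoint (M ∩ M₀) (M \ M₀) := dM₀Q.mono_left Finset.inter_subset_right
        have dyM₀Q : Disjoint ({y} ∪ M₀) (M \ M₀) := by
          rw [Finset.disjoint_union_left]
          exact ⟨Finset.disjoint_singleton_left.2
            (fun e => hyM (Finset.mem_sdiff.1 e).1), dM₀Q⟩
        have hM₀x' : margProb (perturb p (S \ M₀) ε q) M₀ x'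
            = margProb (perturb p (S \ M₀) ε q) M₀ x := agree M₀ _ dM₀Q
        have hyM₀x' : margProb (perturb p (S \ M₀) ε q) ({y} ∪ M₀) x'
            = margProb (perturb p (S \ M₀) ε q) ({y} ∪ M₀) x := agree ({y} ∪ M₀) _ dyM₀Q
        have hprodpos : 0 < ∏ i ∈ M \ M₀, ε * q i (x' i) :=
          Finset.prod_pos fun i hi => mul_pos hε0 ((hq i (hQN hi)).1 _)
        have posM : 0 < margProb (perturb p (S \ M₀) ε q) M x' := by
          have hge := margProb_perturb_ge hp0 hq hε0 hε1 hPN hQN x'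
          rw [eM] at hge
          have hstep : 0 < (∏ i ∈ M \ M₀, ε * q i (x' i)) * margProb p (M ∩ M₀) x' := by
            rw [agree (M ∩ M₀) p dPQ]
            exact mul_pos hprodpos hxP
          linarith
        have posK : 0 < margProb (perturb p (S \ M₀) ε q) (M₀ ∪ M) x' := by
          have hge := margProb_perturb_ge hp0 hq hε0 hε1 hM₀N hQN x'
          rw [eK2'] at hge
          have hpM₀ : 0 < margProb p M₀ x' := by
            rw [agree M₀ p dM₀Q, ← margProb_perturb_disjoint hq1 hM₀N]
            exact hpos
          have hstep : 0 < (∏ i ∈ M \ M₀, ε * q i (x' i)) * margProb p M₀ x' :=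
            mul_pos hprodpos hpM₀
          linarith
        have HM := CI1 x' posM
        rw [Finset.union_assoc, eK1] at HM
        have H2 := CI2 x' (by rw [hM₀x']; exact hpos)
        rw [Finset.union_assoc, eK2, hM₀x', hyM₀x'] at H2
        have key : margProb (perturb p (S \ M₀) ε q) ({y} ∪ M) x'
              * margProb (perturb p (S \ M₀) ε q) (M₀ ∪ M) x'
              * margProb (perturb p (S \ M₀) ε q) M₀ x
            = (margProb (perturb p (S \ M₀) ε q) ({y} ∪ M₀) x
                / margProb (perturb p (S \ M₀) ε q) M₀ x)
              * margProb (perturb p (S \ M₀) ε q) M x'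
              * margProb (perturb p (S \ M₀) ε q) (M₀ ∪ M) x'
              * margProb (perturb p (S \ M₀) ε q) M₀ x := by
          have h1 : margProb (perturb p (S \ M₀) ε q) ({y} ∪ M) x'
                * margProb (perturb p (S \ M₀) ε q) (M₀ ∪ M) x'
                * margProb (perturb p (S \ M₀) ε q) M₀ x
              = margProb (perturb p (S \ M₀) ε q) ({y} ∪ (M₀ ∪ M)) x'
                * margProb (perturb p (S \ M₀) ε q) M₀ x
                * margProb (perturb p (S \ M₀) ε q) M x' := by
            rw [← HM]; ring
          rw [H2] at h1
          rw [h1]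
          field_simp
        have c1 := mul_right_cancel₀ hpos.ne' key
        have c2 := mul_right_cancel₀ posK.ne' c1
        rw [c2]
      have so := margProb_sum_out (p := perturb p (S \ M₀) ε q) (M \ M₀)
        (fun i _ => (1:ℝ)) ({y} ∪ M) M
        (margProb (perturb p (S \ M₀) ε q) ({y} ∪ M₀) x
          / margProb (perturb p (S \ M₀) ε q) M₀ x) x
        (fun a ha => Finset.mem_union.2 (Or.inr (Finset.mem_sdiff.1 ha).1))
        (fun a ha => (Finset.mem_sdiff.1 ha).1) hpt
      have so' : margProb (perturb p (S \ M₀) ε q) (({y} ∪ M) \ (M \ M₀)) x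
          = (margProb (perturb p (S \ M₀) ε q) ({y} ∪ M₀) x
              / margProb (perturb p (S \ M₀) ε q) M₀ x)
            * margProb (perturb p (S \ M₀) ε q) (M \ (M \ M₀)) x := by
        simpa using so
      rw [e_yM, e_M] at so'
      rw [so', div_mul_eq_mul_div, div_mul_eq_mul_div, eq_div_iff hpos.ne']
  -- transfer to p
  have CIp : CondIndep p {y} (M₀ \ M) (M ∩ M₀) := by
    intro x hx
    have dy : Disjoint ({y} : Finset ι) (S \ M₀) := Finset.disjoint_singleton_left.2 hyN
    have dA : Disjoint (M₀ \ M) (S \ M₀) := hM₀N.mono_left Finset.sdiff_subset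
    have h1 := CIp' x (by rwa [margProb_perturb_disjoint hq1 hPN])
    rwa [margProb_perturb_disjoint hq1
        (by rw [Finset.disjoint_union_left]
            exact ⟨by rw [Finset.disjoint_union_left]; exact ⟨dy, dA⟩, hPN⟩),
      margProb_perturb_disjoint hq1 hPN,
      margProb_perturb_disjoint hq1
        (by rw [Finset.disjoint_union_left]; exact ⟨dy, hPN⟩),
      margProb_perturb_disjoint hq1
        (by rw [Finset.disjoint_union_left]; exact ⟨dA, hPN⟩)] at h1
  -- contraction
  have hc1 : CondIndep p {y} (S \ M₀) ((M₀ \ M) ∪ (M ∩ M₀)) := by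
    rw [eAP]
    exact hM₀.1.2
  have hcontr := condIndep_contraction hp0 hc1 CIp
  have eSP : (S \ M₀) ∪ (M₀ \ M) = S \ (M ∩ M₀) := by
    ext a
    simp only [Finset.mem_union, Finset.mem_sdiff, Finset.mem_inter]
    constructor
    · rintro (⟨h1, h2⟩ | ⟨h1, h2⟩)
      · exact ⟨h1, fun h => h2 h.2⟩
      · exact ⟨hM₀S h1, fun h => h2 h.1⟩
    · rintro ⟨h1, h2⟩
      by_cases hM₀1 : a ∈ M₀
      · exact Or.inr ⟨hM₀1, fun h => h2 ⟨h, hM₀1⟩⟩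
      · exact Or.inl ⟨h1, hM₀1⟩
  rw [eSP] at hcontr
  refine hM₀.2 (M ∩ M₀) ?_ ⟨Finset.inter_subset_right.trans hM₀S, hcontr⟩
  exact (Finset.ssubset_iff_of_subset Finset.inter_subset_right).2
    ⟨j, hjM₀, fun hj => hjM (Finset.mem_inter.1 hj).1⟩

variable [∀ i, Nonempty (α i)]

/-- Lemma 4: if `Y` has multiple Markov boundaries within `S` and `M₀` is
one of them, then after adding ε-noise (`0 < ε < 1`, noise pmfs everywhere positive) to
every variable in `S \ M₀`, the set `M₀` is the unique Markov boundary of `Y` within the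
perturbed collection. -/
theorem unique_markov_boundary_after_noise
    (p : (∀ i, α i) → ℝ) (hp : IsDist p)
    (y : ι) (S : Finset ι) (hyS : y ∉ S)
    (hmulti : ∃ M₁ M₂, MarkovBoundary p y S M₁ ∧ MarkovBoundary p y S M₂ ∧ M₁ ≠ M₂)
    (M₀ : Finset ι) (hM₀ : MarkovBoundary p y S M₀)
    (ε : ℝ) (hε0 : 0 < ε) (hε1 : ε < 1)
    (q : ∀ i, α i → ℝ) (hq : ∀ i ∈ S \ M₀, (∀ v, 0 < q i v) ∧ ∑ v, q i v = 1) :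
    MarkovBoundary (perturb p (S \ M₀) ε q) y S M₀ ∧
      ∀ M, MarkovBoundary (perturb p (S \ M₀) ε q) y S M → M = M₀ := by
  have hq1 : ∀ i ∈ S \ M₀, ∑ v, q i v = 1 := fun i hi => (hq i hi).2
  have hyN : y ∉ S \ M₀ := fun e => hyS (Finset.mem_sdiff.1 e).1
  have blanket₀ : MarkovBlanket (perturb p (S \ M₀) ε q) y S M₀ :=
    ⟨hM₀.1.1, condIndep_perturb hq1 subset_rfl Finset.disjoint_sdiff hyN hM₀.1.2⟩
  have contains : ∀ M, MarkovBlanket (perturb p (S \ M₀) ε q) y S M → M₀ ⊆ M :=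
    fun M hM => blanket_contains hp.1 hyS hM₀ hε0 hε1 hq hM
  constructor
  · refine ⟨blanket₀, fun M' hss hbl => ?_⟩
    exact (Finset.ssubset_iff_subset_ne.1 hss).2
      (Finset.Subset.antisymm (Finset.ssubset_iff_subset_ne.1 hss).1 (contains M' hbl))
  · intro M hMbd
    by_contra hne
    have hss : M₀ ⊂ M := Finset.ssubset_iff_subset_ne.2
      ⟨contains M hMbd.1, fun e => hne e.symm⟩
    exact hMbd.2 M₀ hss blanket₀


end
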